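/- arXiv:2106.12301 — 2 statements merged into one kernel-verified Lean document; each statement's English description precedes it below -/
import Mathlib

section
/- Let a > 0 and let C = [[c₁₁, c₁₂],[c₁₂, c₁₁]] be a real symmetric 2×2 matrix with c₁₁ > |c₁₂| > 0. For b ∈ ℝ define 𝒞(b) = diag(a + ib, a − ib) · C ∈ ℂ^{2×2} and b* = a c₁₂ / √(c₁₁² − c₁₂²). Then the two eigenvalues of 𝒞(b) coincide if and only if b² = (b*)²; if b² < (b*)² the eigenvalues are distinct real numbers; and if b² > (b*)² the eigenvalues form a pair λ, λ̄ with equal (nonzero) real part 0 apart from the common shift a c₁₁, i.e. the eigenvalues are a c₁₁ ± i√((a²+b²)(c₁₁²−c₁₂²) − a²c₁₁²) with nonreal square-root part. -/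
open Complex

lemma spec_two_aux (M : Matrix (Fin 2) (Fin 2) ℂ) (s t : ℂ)
    (h : ∀ z : ℂ, z ^ 2 - (M 0 0 + M 1 1) * z + (M 0 0 * M 1 1 - M 0 1 * M 1 0) = (z - s) * (z - t)) :
    spectrum ℂ M = {s, t} := by
  ext z
  rw [spectrum.mem_iff, Matrix.isUnit_iff_isUnit_det, isUnit_iff_ne_zero, not_not,
    Matrix.det_fin_two]
  simp only [Matrix.sub_apply, Matrix.algebraMap_matrix_apply, if_true,
    show ((0:Fin 2) = 1) = False by simp, show ((1:Fin 2) = 0) = False by simp, if_false,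
    Algebra.algebraMap_self, RingHom.id_apply, zero_sub, Set.mem_insert_iff, Set.mem_singleton_iff]
  rw [show (z - M 0 0) * (z - M 1 1) - -M 0 1 * -M 1 0 =
      z ^ 2 - (M 0 0 + M 1 1) * z + (M 0 0 * M 1 1 - M 0 1 * M 1 0) by ring, h z, mul_eq_zero,
    sub_eq_zero, sub_eq_zero]

/-- Exceptional point of a 𝒫𝒯-symmetric pair of subwavelength resonators:
the eigenvalues of `𝒞(b) = diag(a+ib, a-ib)·C` coincide iff `b² = (b*)²`,
are distinct real numbers when `b² < (b*)²`, and form a conjugate pair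
`a c₁₁ ± i√((a²+b²)(c₁₁²-c₁₂²) - a²c₁₁²)` when `b² > (b*)²`. -/
theorem stmt_4 (a c11 c12 : ℝ) (ha : 0 < a) (hc : |c12| < c11) (hc' : 0 < |c12|) :
    ∀ b : ℝ,
      let C : Matrix (Fin 2) (Fin 2) ℂ := !![(c11 : ℂ), (c12 : ℂ); (c12 : ℂ), (c11 : ℂ)]
      let M : Matrix (Fin 2) (Fin 2) ℂ :=
        Matrix.diagonal ![(a : ℂ) + b * Complex.I, (a : ℂ) - b * Complex.I] * C
      let bstar : ℝ := a * c12 / Real.sqrt (c11 ^ 2 - c12 ^ 2)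
      ((∃! lam : ℂ, lam ∈ spectrum ℂ M) ↔ b ^ 2 = bstar ^ 2) ∧
      (b ^ 2 < bstar ^ 2 →
        ∃ l1 l2 : ℝ, l1 ≠ l2 ∧ spectrum ℂ M = {(l1 : ℂ), (l2 : ℂ)}) ∧
      (b ^ 2 > bstar ^ 2 →
        0 < (a ^ 2 + b ^ 2) * (c11 ^ 2 - c12 ^ 2) - a ^ 2 * c11 ^ 2 ∧
        spectrum ℂ M =
          {((a * c11 : ℝ) : ℂ) + Complex.I *
              (Real.sqrt ((a ^ 2 + b ^ 2) * (c11 ^ 2 - c12 ^ 2) - a ^ 2 * c11 ^ 2) : ℂ),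
           ((a * c11 : ℝ) : ℂ) - Complex.I *
              (Real.sqrt ((a ^ 2 + b ^ 2) * (c11 ^ 2 - c12 ^ 2) - a ^ 2 * c11 ^ 2) : ℂ)}) := by
  intro b C M bstar
  have hd : (0:ℝ) < c11 ^ 2 - c12 ^ 2 := by nlinarith [_root_.sq_abs c12, abs_nonneg c12]
  have hbs : bstar ^ 2 = a ^ 2 * c12 ^ 2 / (c11 ^ 2 - c12 ^ 2) := by
    show (a * c12 / Real.sqrt (c11 ^ 2 - c12 ^ 2)) ^ 2 = _
    rw [div_pow, Real.sq_sqrt hd.le]; ring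
  set K : ℝ := (a ^ 2 + b ^ 2) * (c11 ^ 2 - c12 ^ 2) - a ^ 2 * c11 ^ 2 with hKdef
  have hKeq : K = b ^ 2 * (c11 ^ 2 - c12 ^ 2) - a ^ 2 * c12 ^ 2 := by rw [hKdef]; ring
  have hlt : (b ^ 2 < bstar ^ 2) ↔ K < 0 := by
    rw [hbs, lt_div_iff₀ hd, hKeq]; constructor <;> intro h <;> linarith
  have hgt : (b ^ 2 > bstar ^ 2) ↔ 0 < K := by
    rw [hbs, gt_iff_lt, div_lt_iff₀ hd, hKeq]; constructor <;> intro h <;> linarith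
  have heq : (b ^ 2 = bstar ^ 2) ↔ K = 0 := by
    rw [hbs, eq_div_iff hd.ne', hKeq]; constructor <;> intro h <;> linarith
  -- entries of M
  have e00 : M 0 0 = ((a:ℂ) + b * Complex.I) * c11 := by
    simp [M, C, Matrix.mul_apply, Fin.sum_univ_two]
  have e01 : M 0 1 = ((a:ℂ) + b * Complex.I) * c12 := by
    simp [M, C, Matrix.mul_apply, Fin.sum_univ_two]
  have e10 : M 1 0 = ((a:ℂ) - b * Complex.I) * c12 := by
    simp [M, C, Matrix.mul_apply, Fin.sum_univ_two]
  have e11 : M 1 1 = ((a:ℂ) - b * Complex.I) * c11 := by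
    simp [M, C, Matrix.mul_apply, Fin.sum_univ_two]
  have hspec : ∀ s t : ℂ, s + t = 2 * (a * c11) →
      s * t = (((a ^ 2 + b ^ 2) * (c11 ^ 2 - c12 ^ 2) : ℝ) : ℂ) →
      spectrum ℂ M = {s, t} := by
    intro s t hs hp
    apply spec_two_aux
    intro z
    rw [e00, e01, e10, e11]
    push_cast at hp ⊢
    linear_combination z * hs - hp -
      (b:ℂ) ^ 2 * ((c11:ℂ) ^ 2 - (c12:ℂ) ^ 2) * Complex.I_sq
  -- case K = 0
  have spec0 : K = 0 → spectrum ℂ M = {((a * c11 : ℝ) : ℂ)} := by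
    intro h0
    have h0' : (a ^ 2 + b ^ 2) * (c11 ^ 2 - c12 ^ 2) - a ^ 2 * c11 ^ 2 = 0 := by
      rw [← hKdef]; exact h0
    have hr : (a * c11) * (a * c11) = (a ^ 2 + b ^ 2) * (c11 ^ 2 - c12 ^ 2) := by nlinarith [h0']
    have := hspec ((a * c11 : ℝ) : ℂ) ((a * c11 : ℝ) : ℂ)
      (by push_cast; ring)
      (by rw [← Complex.ofReal_mul, hr])
    rw [this]; simp
  -- case K < 0
  have specneg : K < 0 → ∃ l1 l2 : ℝ, l1 ≠ l2 ∧ spectrum ℂ M = {(l1 : ℂ), (l2 : ℂ)} := by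
    intro h0
    set r := Real.sqrt (-K) with hr
    have hr2 : r ^ 2 = -K := Real.sq_sqrt (by linarith)
    have hrpos : 0 < r := Real.sqrt_pos.mpr (by linarith)
    refine ⟨a * c11 + r, a * c11 - r, by intro h; linarith, ?_⟩
    apply hspec <;> push_cast
    · ring
    · have : (a * c11 + r) * (a * c11 - r) = (a ^ 2 + b ^ 2) * (c11 ^ 2 - c12 ^ 2) := by
        nlinarith [hr2]
      exact_mod_cast congrArg (Complex.ofReal) this
  -- case K > 0
  have specpos : 0 < K → spectrum ℂ M =
      {((a * c11 : ℝ) : ℂ) + Complex.I * ((Real.sqrt K : ℝ) : ℂ),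
       ((a * c11 : ℝ) : ℂ) - Complex.I * ((Real.sqrt K : ℝ) : ℂ)} := by
    intro h0
    have hr2 : (Real.sqrt K : ℝ) ^ 2 = K := Real.sq_sqrt h0.le
    apply hspec
    · push_cast; ring
    · have hc2 : ((Real.sqrt K : ℝ) : ℂ) ^ 2 = (K : ℂ) := by exact_mod_cast congrArg Complex.ofReal hr2
      have hKc : (K : ℂ) = ((a:ℂ) ^ 2 + (b:ℂ) ^ 2) * ((c11:ℂ) ^ 2 - (c12:ℂ) ^ 2) - ((a:ℂ) * c11) ^ 2 := by
        rw [hKdef]; push_cast; ring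
      push_cast
      linear_combination (-Complex.I ^ 2) * hc2 + (-(K : ℂ)) * Complex.I_sq + hKc
  refine ⟨?_, fun h => specneg (hlt.mp h), fun h => ⟨hgt.mp h, specpos (hgt.mp h)⟩⟩
  constructor
  · rintro ⟨lam, hlam, huniq⟩
    by_contra hne
    rcases lt_or_gt_of_ne hne with h | h
    · obtain ⟨l1, l2, hne12, hsp⟩ := specneg (hlt.mp h)
      have h1 : ((l1:ℝ):ℂ) = lam := huniq _ (by rw [hsp]; simp)
      have h2 : ((l2:ℝ):ℂ) = lam := huniq _ (by rw [hsp]; simp)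
      exact hne12 (by exact_mod_cast h1.trans h2.symm)
    · have hK := hgt.mp h
      have hsp := specpos hK
      have hrpos : 0 < Real.sqrt K := Real.sqrt_pos.mpr hK
      have h1 := huniq (((a * c11 : ℝ) : ℂ) + Complex.I * ((Real.sqrt K : ℝ) : ℂ))
        (by rw [hsp]; simp)
      have h2 := huniq (((a * c11 : ℝ) : ℂ) - Complex.I * ((Real.sqrt K : ℝ) : ℂ))
        (by rw [hsp]; simp)
      have h3 : ((a * c11 : ℝ) : ℂ) + Complex.I * ((Real.sqrt K : ℝ) : ℂ) =
          ((a * c11 : ℝ) : ℂ) - Complex.I * ((Real.sqrt K : ℝ) : ℂ) := h1.trans h2.symm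
      have : Complex.I * ((Real.sqrt K : ℝ) : ℂ) = 0 := by
        have := sub_eq_zero.mpr h3
        have h4 : (2:ℂ) * (Complex.I * ((Real.sqrt K : ℝ) : ℂ)) = 0 := by
          linear_combination this
        simpa using h4
      rw [mul_eq_zero] at this
      rcases this with h5 | h5
      · exact Complex.I_ne_zero h5
      · exact absurd (by exact_mod_cast h5) hrpos.ne'
  · intro h
    have h0 := heq.mp h
    exact ⟨((a * c11 : ℝ) : ℂ), by rw [spec0 h0]; simp, fun y hy => by
      rw [spec0 h0] at hy; simpa using hy⟩
end

section
/- Let δ, v : ℝ → ℝ be C² functions with δ(t) > 0 and v(t) > 0 for all t, let |D| > 0 and c ∈ ℝ, and suppose y : ℝ → ℝ is C² and satisfies c·y(t) = −(|D|/δ(t)) · d/dt[ (1/(δ(t)v(t)²)) · d(δ(t)y(t))/dt ]. Define Ψ(t) = (√(δ(t))/v(t)) y(t), w₁(t) = v(t)δ(t)^{3/2}/|D|, w₂(t) = v(t)/√(δ(t)), and w₃(t) = (√(δ(t)) v(t)/2) · d/dt[ (δ(t)v(t)²)^{−3/2} · d(δ(t)v(t)²)/dt ]. Then Ψ satisfies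 the Hill equation Ψ''(t) + (w₁(t)·c·w₂(t) + w₃(t)) Ψ(t) = 0. -/
set_option maxHeartbeats 1000000 in
/-- Scalar reduction of the capacitance ODE of time-modulated subwavelength
resonators to a Hill equation: if `c y = −(|D|/δ) d/dt[(1/(δv²)) d(δy)/dt]`
then `Ψ = (√δ/v) y` satisfies `Ψ'' + (w₁ c w₂ + w₃)Ψ = 0`. -/
theorem stmt_16 (δ v y : ℝ → ℝ) (hδ : ContDiff ℝ 2 δ) (hv : ContDiff ℝ 2 v)
    (hy : ContDiff ℝ 2 y) (hδpos : ∀ t, 0 < δ t) (hvpos : ∀ t, 0 < v t)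
    (Dvol : ℝ) (hD : 0 < Dvol) (c : ℝ)
    (hode : ∀ t, c * y t =
      -(Dvol / δ t) *
        deriv (fun s => (1 / (δ s * v s ^ 2)) * deriv (fun r => δ r * y r) s) t) :
    let Ψ : ℝ → ℝ := fun t => Real.sqrt (δ t) / v t * y t
    let w₁ : ℝ → ℝ := fun t => v t * δ t ^ ((3 : ℝ) / 2) / Dvol
    let w₂ : ℝ → ℝ := fun t => v t / Real.sqrt (δ t)
    let w₃ : ℝ → ℝ := fun t => Real.sqrt (δ t) * v t / 2 *
      deriv (fun s => (δ s * v s ^ 2) ^ (-(3 : ℝ) / 2) *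
        deriv (fun r => δ r * v r ^ 2) s) t
    ∀ t, deriv (deriv Ψ) t + (w₁ t * c * w₂ t + w₃ t) * Ψ t = 0 := by
  intro Ψ w₁ w₂ w₃ t
  set g : ℝ → ℝ := fun r => δ r * y r with hg_def
  set F : ℝ → ℝ := fun r => δ r * v r ^ 2 with hF_def
  have hFpos : ∀ s, 0 < F s := fun s => mul_pos (hδpos s) (pow_pos (hvpos s) 2)
  have hgC : ContDiff ℝ 2 g := hδ.mul hy
  have hFC : ContDiff ℝ 2 F := hδ.mul (hv.pow 2)
  have hderivC : ∀ f : ℝ → ℝ, ContDiff ℝ 2 f → ContDiff ℝ 1 (deriv f) := by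
    intro f h
    rw [← one_add_one_eq_two] at h
    exact (contDiff_succ_iff_deriv.mp h).2.2
  have hg' : ∀ s, HasDerivAt g (deriv g s) s :=
    fun s => ((hgC.differentiable two_ne_zero) s).hasDerivAt
  have hF' : ∀ s, HasDerivAt F (deriv F s) s :=
    fun s => ((hFC.differentiable two_ne_zero) s).hasDerivAt
  have hg'' : ∀ s, HasDerivAt (deriv g) (deriv (deriv g) s) s :=
    fun s => (((hderivC g hgC).differentiable one_ne_zero) s).hasDerivAt
  have hF'' : ∀ s, HasDerivAt (deriv F) (deriv (deriv F) s) s :=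
    fun s => (((hderivC F hFC).differentiable one_ne_zero) s).hasDerivAt
  -- p = F^{-1/2}
  set p : ℝ → ℝ := fun s => F s ^ (-(1:ℝ)/2) with hp_def
  have hp : ∀ s, HasDerivAt p (deriv F s * (-(1:ℝ)/2) * F s ^ ((-(1:ℝ)/2) - 1)) s :=
    fun s => (hF' s).rpow_const (Or.inl (hFpos s).ne')
  have hq3 : ∀ s, HasDerivAt (fun u => F u ^ (-(3:ℝ)/2))
      (deriv F s * (-(3:ℝ)/2) * F s ^ ((-(3:ℝ)/2) - 1)) s :=
    fun s => (hF' s).rpow_const (Or.inl (hFpos s).ne')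
  set q : ℝ → ℝ := fun s => F s ^ (-(3:ℝ)/2) * deriv F s with hq_def
  have hq : ∀ s, HasDerivAt q
      (deriv F s * (-(3:ℝ)/2) * F s ^ ((-(3:ℝ)/2) - 1) * deriv F s
        + F s ^ (-(3:ℝ)/2) * deriv (deriv F) s) s :=
    fun s => (hq3 s).mul (hF'' s)
  -- Ψ = g * p
  have hΨeq : Ψ = fun s => g s * p s := by
    funext s
    have hvs := (hvpos s).le
    have hδs := (hδpos s).le
    have hsq : Real.sqrt (F s) = Real.sqrt (δ s) * v s := by
      rw [hF_def]
      rw [Real.sqrt_mul hδs, Real.sqrt_sq hvs]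
    have hrp : p s = (Real.sqrt (F s))⁻¹ := by
      rw [hp_def, Real.sqrt_eq_rpow, ← Real.rpow_neg (hFpos s).le]
      norm_num
    simp only [Ψ, hg_def, hrp, hsq]
    have h1 : Real.sqrt (δ s) * Real.sqrt (δ s) = δ s := Real.mul_self_sqrt hδs
    have h2 : Real.sqrt (δ s) ≠ 0 := (Real.sqrt_pos.mpr (hδpos s)).ne'
    have h3 : v s ≠ 0 := (hvpos s).ne'
    field_simp
    linear_combination (y s) * h1
  -- first derivative of Ψ
  have hΨ' : deriv Ψ = fun s => deriv g s * p s
      + g s * (deriv F s * (-(1:ℝ)/2) * F s ^ ((-(1:ℝ)/2) - 1)) := by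
    funext s
    rw [hΨeq]
    exact ((hg' s).mul (hp s)).deriv
  -- ODE in usable form: g'' = g' F'/F - (c/Dvol) g F
  have hode2 : ∀ s, deriv (deriv g) s
      = deriv g s * deriv F s / F s - c / Dvol * g s * F s := by
    intro s
    have hL : HasDerivAt (fun u => (1 / F u) * deriv g u)
        (-(deriv F s) / (F s)^2 * deriv g s + (1 / F s) * deriv (deriv g) s) s := by
      have hinv : HasDerivAt (fun u => 1 / F u) (-(deriv F s) / (F s)^2) s := by
        exact ((hF' s).inv (hFpos s).ne').congr_of_eventuallyEq
          (Filter.Eventually.of_forall fun u => by simp)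
      exact hinv.mul (hg'' s)
    have h0 := hode s
    rw [hL.deriv] at h0
    have hδs := (hδpos s).ne'
    have hFs := (hFpos s).ne'
    have hDs := hD.ne'
    have hFne2 := (hFpos s).ne'
    field_simp at h0 ⊢
    apply mul_right_cancel₀ (mul_ne_zero hFne2 hFne2)
    simp only [hg_def] at h0 ⊢
    linear_combination (F s) * (F s) * h0
  -- second derivative of Ψ
  have hΨ'' : deriv (deriv Ψ) t =
      deriv (deriv g) t * p t
      + deriv g t * (deriv F t * (-(1:ℝ)/2) * F t ^ ((-(1:ℝ)/2) - 1))
      + (deriv g t * ((-(1:ℝ)/2) * q t)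
        + g t * ((-(1:ℝ)/2) * (deriv F t * (-(3:ℝ)/2) * F t ^ ((-(3:ℝ)/2) - 1) * deriv F t
          + F t ^ (-(3:ℝ)/2) * deriv (deriv F) t))) := by
    rw [hΨ']
    have h1 : HasDerivAt (fun s => deriv g s * p s)
        (deriv (deriv g) t * p t + deriv g t * (deriv F t * (-(1:ℝ)/2) * F t ^ ((-(1:ℝ)/2) - 1))) t :=
      (hg'' t).mul (hp t)
    have h2 : HasDerivAt (fun s => g s * ((-(1:ℝ)/2) * q s))
        (deriv g t * ((-(1:ℝ)/2) * q t)
          + g t * ((-(1:ℝ)/2) * (deriv F t * (-(3:ℝ)/2) * F t ^ ((-(3:ℝ)/2) - 1) * deriv F t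
            + F t ^ (-(3:ℝ)/2) * deriv (deriv F) t))) t :=
      (hg' t).mul ((hq t).const_mul (-(1:ℝ)/2))
    have h3 : (fun s => deriv g s * p s
        + g s * (deriv F s * (-(1:ℝ)/2) * F s ^ ((-(1:ℝ)/2) - 1)))
        = fun s => deriv g s * p s + g s * ((-(1:ℝ)/2) * q s) := by
      funext s
      rw [hq_def]
      have : F s ^ ((-(1:ℝ)/2) - 1) = F s ^ (-(3:ℝ)/2) := by norm_num
      rw [this]; ring
    rw [h3]
    exact (h1.add h2).deriv
  -- now convert everything to sqrt-language and finish
  have hδt := (hδpos t).le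
  have hvt := (hvpos t).le
  set sd : ℝ := Real.sqrt (δ t) with hsd_def
  have hsdpos : 0 < sd := Real.sqrt_pos.mpr (hδpos t)
  have hsd2 : sd ^ 2 = δ t := Real.sq_sqrt hδt
  have hsF : Real.sqrt (F t) = sd * v t := by
    rw [hF_def]; rw [Real.sqrt_mul hδt, Real.sqrt_sq hvt]
  have hFt : F t = sd ^ 2 * v t ^ 2 := by rw [hF_def]; simp [hsd2]
  -- rpow conversions
  have hXpos : (0:ℝ) < F t := hFpos t
  have e1 : F t ^ (-(1:ℝ)/2) = (sd * v t)⁻¹ := by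
    rw [← hsF, Real.sqrt_eq_rpow, ← Real.rpow_neg hXpos.le]
    norm_num
  have e2 : F t ^ (-(3:ℝ)/2) = (sd * v t)⁻¹ * (F t)⁻¹ := by
    have : (-(3:ℝ)/2) = (-(1:ℝ)/2) + (-1) := by norm_num
    rw [this, Real.rpow_add hXpos, Real.rpow_neg_one, e1]
  have e3 : F t ^ ((-(1:ℝ)/2) - 1) = (sd * v t)⁻¹ * (F t)⁻¹ := by
    have : ((-(1:ℝ)/2) - 1) = -(3:ℝ)/2 := by norm_num
    rw [this, e2]
  have e4 : F t ^ ((-(3:ℝ)/2) - 1) = (sd * v t)⁻¹ * (F t)⁻¹ * (F t)⁻¹ := by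
    have : ((-(3:ℝ)/2) - 1) = (-(3:ℝ)/2) + (-1) := by norm_num
    rw [this, Real.rpow_add hXpos, Real.rpow_neg_one, e2]
  have e5 : δ t ^ ((3:ℝ)/2) = δ t * sd := by
    have : ((3:ℝ)/2) = 1 + (1:ℝ)/2 := by norm_num
    rw [this, Real.rpow_add (hδpos t), Real.rpow_one, ← Real.sqrt_eq_rpow, ← hsd_def]
  -- w₃ * Ψ value
  have hw3 : w₃ t = sd * v t / 2 *
      (deriv F t * (-(3:ℝ)/2) * F t ^ ((-(3:ℝ)/2) - 1) * deriv F t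
        + F t ^ (-(3:ℝ)/2) * deriv (deriv F) t) := by
    have : w₃ t = sd * v t / 2 * deriv q t := rfl
    rw [this, (hq t).deriv]
  have hΨt : Ψ t = g t * p t := by rw [hΨeq]
  have hw1 : w₁ t = v t * (δ t * sd) / Dvol := by
    show v t * δ t ^ ((3:ℝ)/2) / Dvol = _
    rw [e5]
  have hw2 : w₂ t = v t / sd := rfl
  rw [hΨ'', hw3, hΨt, hw1, hw2, hode2 t]
  rw [hp_def]
  simp only [hq_def]
  simp only [e1, e2, e3, e4]
  have hvne : v t ≠ 0 := (hvpos t).ne'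
  have hsdne : sd ≠ 0 := hsdpos.ne'
  have hFne : F t ≠ 0 := hXpos.ne'
  have hDne : Dvol ≠ 0 := hD.ne'
  rw [hFt, ← hsd2]
  field_simp
  ring
end
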